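/- arXiv:1406.5085 — 3 statements merged into one kernel-verified Lean document; each statement's English description precedes it below -/
import Mathlib

section
/- Assume the Continuum Hypothesis, i.e. 2^ℵ₀ = ℵ₁. Then there exists a set F of entire functions (functions ℂ → ℂ analytic on all of ℂ) which is uncountable, yet for every point z ∈ ℂ the set of values {f(z) : f ∈ F} is countable. -/
open Cardinal

namespace ErdosWetzel

/-- `wg p n z = ∏_{k<n} (z - p k)`, the Newton-type basis polynomials. -/
noncomputable def wg (p : ℕ → ℂ) (n : ℕ) (z : ℂ) : ℂ :=
  ∏ k ∈ Finset.range n, (z - p k)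

/-- coefficient bounds -/
noncomputable def weps (p : ℕ → ℂ) (n : ℕ) : ℝ :=
  (1 / 2) ^ n / ∏ k ∈ Finset.range n, ((k : ℝ) + 1 + ‖p k‖)

lemma wden_pos (p : ℕ → ℂ) (n : ℕ) :
    0 < ∏ k ∈ Finset.range n, ((k : ℝ) + 1 + ‖p k‖) :=
  Finset.prod_pos fun k _ => by positivity

lemma weps_pos (p : ℕ → ℂ) (n : ℕ) : 0 < weps p n :=
  div_pos (by positivity) (wden_pos p n)

lemma weps_zero (p : ℕ → ℂ) : weps p 0 = 1 := by simp [weps]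

/-- List of coefficients built by primitive recursion. -/
noncomputable def buildList (c0 : ℂ) (step : List ℂ → ℂ) : ℕ → List ℂ
  | 0 => [c0]
  | n + 1 => buildList c0 step n ++ [step (buildList c0 step n)]

lemma wg_diff (p : ℕ → ℂ) (n : ℕ) : Differentiable ℂ (wg p n) := by
  apply Differentiable.fun_finsetProd
  intro k _
  exact differentiable_id.sub_const _

lemma wg_self_ne_zero {p : ℕ → ℂ} (hp : Function.Injective p) (n : ℕ) :
    wg p n (p n) ≠ 0 := by
  refine Finset.prod_ne_zero_iff.2 fun k hk => sub_ne_zero.2 fun h => ?_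
  exact absurd (hp h) (Finset.mem_range.1 hk).ne'

lemma wg_eq_zero {p : ℕ → ℂ} {m n : ℕ} (h : m < n) : wg p n (p m) = 0 :=
  Finset.prod_eq_zero (Finset.mem_range.2 h) (sub_self _)

/-- Core interpolation lemma: given an injective sequence of points, there is an
entire function sending all but the first point into the dense set `D`, with
prescribed (small) value at the first point. -/
lemma interp (D : Set ℂ) (hDd : Dense D) (p : ℕ → ℂ) (hp : Function.Injective p)
    (c0 : ℂ) (hc0 : ‖c0‖ ≤ 1) :
    ∃ f : ℂ → ℂ, Differentiable ℂ f ∧ (∀ n, 1 ≤ n → f (p n) ∈ D) ∧ f (p 0) = c0 := by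
  classical
  -- the recursive choice of the next coefficient
  have hstep : ∀ l : List ℂ, ∃ x : ℂ,
      ‖x‖ ≤ weps p l.length ∧
      (∑ m ∈ Finset.range l.length, l.getD m 0 * wg p m (p l.length))
        + x * wg p l.length (p l.length) ∈ D := by
    intro l
    set k := l.length
    set A : ℂ := ∑ m ∈ Finset.range k, l.getD m 0 * wg p m (p k) with hA
    have hw : wg p k (p k) ≠ 0 := wg_self_ne_zero hp k
    have hwpos : 0 < ‖wg p k (p k)‖ := norm_pos_iff.2 hw
    obtain ⟨d, hdD, hdist⟩ :=
      hDd.exists_dist_lt A (mul_pos (weps_pos p k) hwpos)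
    refine ⟨(d - A) / wg p k (p k), ?_, ?_⟩
    · rw [norm_div, div_le_iff₀ hwpos]
      have : ‖d - A‖ = dist d A := (dist_eq_norm _ _).symm
      rw [this, dist_comm]
      exact hdist.le
    · rw [div_mul_cancel₀ _ hw]
      have : A + (d - A) = d := by ring
      rw [this]; exact hdD
  choose step hstep1 hstep2 using hstep
  set L : ℕ → List ℂ := buildList c0 step with hLdef
  set c : ℕ → ℂ := fun n => ((L n).getLast?).getD 0 with hcdef
  have hc0' : c 0 = c0 := by simp [hcdef, hLdef, buildList]
  have hLsucc : ∀ n, L (n + 1) = L n ++ [step (L n)] := fun n => rfl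
  have hcsucc : ∀ n, c (n + 1) = step (L n) := by
    intro n
    simp [hcdef, hLsucc n, List.getLast?_concat]
  have hLmap : ∀ n, L n = (List.range (n + 1)).map c := by
    intro n
    induction n with
    | zero =>
      have h01 : List.range 1 = [0] := rfl
      rw [h01]
      simp [hLdef, buildList, hc0']
    | succ n ih =>
      rw [hLsucc n, ← hcsucc n, ih, List.range_succ, List.map_append]
      simp [List.range_succ]
  have hlen : ∀ n, (L n).length = n + 1 := by
    intro n; rw [hLmap n]; simp
  have hgetD : ∀ n m, m ≤ n → (L n).getD m 0 = c m := by
    intro n m hm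
    have hm' : m < ((List.range (n + 1)).map c).length := by simpa using Nat.lt_succ_of_le hm
    rw [hLmap n, List.getD_eq_getElem _ _ hm']
    simp
  have hnc : ∀ n, ‖c n‖ ≤ weps p n := by
    intro n
    cases n with
    | zero => rw [hc0', weps_zero]; exact hc0
    | succ n =>
      rw [hcsucc n]
      have := hstep1 (L n)
      rwa [hlen n] at this
  -- the entire function
  set f : ℂ → ℂ := fun z => ∑' n, c n * wg p n z with hfdef
  have hfval : ∀ m : ℕ, f (p m) = ∑ n ∈ Finset.range (m + 1), c n * wg p n (p m) := by
    intro m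
    apply tsum_eq_sum
    intro b hb
    have hmb : m < b := by
      by_contra h
      exact hb (Finset.mem_range.2 (Nat.lt_succ_of_le (not_lt.1 h)))
    rw [wg_eq_zero hmb, mul_zero]
  -- differentiability
  have hdiff : Differentiable ℂ f := by
    intro z0
    set R : ℝ := ‖z0‖ + 1 with hR
    have hRpos : 0 < R := by positivity
    set N : ℕ := ⌈R⌉₊ with hN
    set C : ℝ := ∏ k ∈ Finset.range N, (1 + R + ‖p k‖) with hC
    have hbound : ∀ (n : ℕ), ∀ w ∈ Metric.ball (0 : ℂ) R,
        ‖c n * wg p n w‖ ≤ C * (1 / 2) ^ n := by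
      intro n w hw
      have hwR : ‖w‖ ≤ R := (mem_ball_zero_iff.1 hw).le
      have h1 : ‖c n * wg p n w‖ ≤ weps p n * ∏ k ∈ Finset.range n, (R + ‖p k‖) := by
        rw [norm_mul]
        refine mul_le_mul (hnc n) ?_ (norm_nonneg _) (weps_pos p n).le
        rw [wg, norm_prod]
        refine Finset.prod_le_prod (fun k _ => norm_nonneg _) fun k _ => ?_
        calc ‖w - p k‖ ≤ ‖w‖ + ‖p k‖ := norm_sub_le _ _
          _ ≤ R + ‖p k‖ := by linarith
      have h2 : weps p n * ∏ k ∈ Finset.range n, (R + ‖p k‖)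
          = (1 / 2) ^ n * ∏ k ∈ Finset.range n, ((R + ‖p k‖) / ((k : ℝ) + 1 + ‖p k‖)) := by
        rw [Finset.prod_div_distrib, weps]
        field_simp
      have h3 : ∏ k ∈ Finset.range n, ((R + ‖p k‖) / ((k : ℝ) + 1 + ‖p k‖)) ≤ C := by
        have hle : ∀ k ∈ Finset.range n,
            (R + ‖p k‖) / ((k : ℝ) + 1 + ‖p k‖)
              ≤ (if k < N then 1 + R + ‖p k‖ else 1) := by
          intro k _
          have hden : (1 : ℝ) ≤ (k : ℝ) + 1 + ‖p k‖ := by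
            have h1 : (0 : ℝ) ≤ (k : ℝ) := Nat.cast_nonneg k
            have h2 : (0 : ℝ) ≤ ‖p k‖ := norm_nonneg _
            linarith
          by_cases hk : k < N
          · rw [if_pos hk]
            calc (R + ‖p k‖) / ((k : ℝ) + 1 + ‖p k‖) ≤ R + ‖p k‖ :=
                div_le_self (by positivity) hden
              _ ≤ 1 + R + ‖p k‖ := by linarith
          · rw [if_neg hk]
            rw [div_le_one (by positivity)]
            have hRN : R ≤ (N : ℝ) := Nat.le_ceil R
            have hNk : (N : ℝ) ≤ (k : ℝ) := Nat.cast_le.2 (not_lt.1 hk)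
            linarith
        calc ∏ k ∈ Finset.range n, ((R + ‖p k‖) / ((k : ℝ) + 1 + ‖p k‖))
            ≤ ∏ k ∈ Finset.range n, (if k < N then 1 + R + ‖p k‖ else 1) :=
              Finset.prod_le_prod (fun k _ => by positivity) hle
          _ ≤ C := by
              have hs_nonneg : ∀ k : ℕ, (0:ℝ) ≤ (if k < N then 1 + R + ‖p k‖ else 1) := by
                intro k
                by_cases hk : k < N
                · rw [if_pos hk]
                  have h1 : (0:ℝ) ≤ ‖p k‖ := norm_nonneg _
                  linarith
                · rw [if_neg hk]; norm_num
              have hCs : ∏ k ∈ Finset.range N, (if k < N then 1 + R + ‖p k‖ else 1) = C := by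
                refine Finset.prod_congr rfl fun k hk => ?_
                rw [if_pos (Finset.mem_range.1 hk)]
              rcases le_or_gt n N with hnN | hNn
              · rw [← hCs, ← Finset.prod_range_mul_prod_Ico
                  (fun k => if k < N then 1 + R + ‖p k‖ else 1) hnN]
                refine le_mul_of_one_le_right
                  (Finset.prod_nonneg fun k _ => hs_nonneg k) ?_
                have hone := Finset.prod_le_prod (s := Finset.Ico n N)
                  (f := fun _ : ℕ => (1:ℝ))
                  (g := fun k => if k < N then 1 + R + ‖p k‖ else 1)
                  (fun _ _ => zero_le_one) (fun k hk => by
                    rw [if_pos (Finset.mem_Ico.1 hk).2]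
                    have h1 : (0:ℝ) ≤ ‖p k‖ := norm_nonneg _
                    linarith)
                simpa using hone
              · rw [← Finset.prod_range_mul_prod_Ico
                  (fun k => if k < N then 1 + R + ‖p k‖ else 1) hNn.le]
                have hone : ∏ k ∈ Finset.Ico N n,
                    (if k < N then 1 + R + ‖p k‖ else 1) = 1 := by
                  refine Finset.prod_eq_one fun k hk => ?_
                  rw [if_neg (not_lt.2 (Finset.mem_Ico.1 hk).1)]
                rw [hone, mul_one, hCs]
      calc ‖c n * wg p n w‖
          ≤ (1 / 2) ^ n * ∏ k ∈ Finset.range n, ((R + ‖p k‖) / ((k : ℝ) + 1 + ‖p k‖)) := by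
            rw [← h2]; exact h1
        _ ≤ (1 / 2) ^ n * C := by
            exact mul_le_mul_of_nonneg_left h3 (by positivity)
        _ = C * (1 / 2) ^ n := mul_comm _ _
    have hsum : Summable (fun n : ℕ => C * (1 / 2) ^ n) :=
      summable_geometric_two.mul_left C
    have hdo : DifferentiableOn ℂ f (Metric.ball (0 : ℂ) R) := by
      apply Complex.differentiableOn_tsum_of_summable_norm hsum
        (fun n => ((wg_diff p n).const_mul (c n)).differentiableOn)
        Metric.isOpen_ball
      intro i w hw
      exact hbound i w hw
    have hz0 : z0 ∈ Metric.ball (0 : ℂ) R := mem_ball_zero_iff.2 (by rw [hR]; linarith)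
    exact hdo.differentiableAt (Metric.isOpen_ball.mem_nhds hz0)
  refine ⟨f, hdiff, ?_, ?_⟩
  · rintro (_ | m) hm
    · omega
    · rw [hfval (m + 1)]
      have hs := hstep2 (L m)
      rw [hlen m] at hs
      have heq : ∑ j ∈ Finset.range (m + 1), (L m).getD j 0 * wg p j (p (m + 1))
          = ∑ j ∈ Finset.range (m + 1), c j * wg p j (p (m + 1)) := by
        refine Finset.sum_congr rfl fun j hj => ?_
        rw [hgetD m j (Nat.lt_succ_iff.1 (Finset.mem_range.1 hj))]
      rw [heq, ← hcsucc m] at hs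
      rw [Finset.sum_range_succ]
      exact hs
  · rw [hfval 0]
    simp [wg, hc0']

end ErdosWetzel

/-- Erdős' theorem (the other direction of Wetzel's problem): assuming the
Continuum Hypothesis, there is an uncountable family of entire functions whose
set of values at each point of `ℂ` is countable. -/
theorem exists_uncountable_family_of_CH
    (hCH : (2 : Cardinal) ^ Cardinal.aleph0 = Cardinal.aleph 1) :
    ∃ F : Set (ℂ → ℂ),
      (∀ f ∈ F, Differentiable ℂ f) ∧
      ¬ F.Countable ∧
      ∀ z : ℂ, ((fun f : ℂ → ℂ => f z) '' F).Countable := by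
  classical
  obtain ⟨D, hDc, hDd⟩ := TopologicalSpace.exists_countable_dense ℂ
  -- a point of norm ≤ 1 outside D
  have hc0ex : ∃ c0 : ℂ, ‖c0‖ ≤ 1 ∧ c0 ∉ D := by
    by_contra h
    push_neg at h
    have hsub : Set.Icc (0 : ℝ) 1 ⊆ (fun t : ℝ => (t : ℂ)) ⁻¹' D := by
      intro t ht
      refine h _ ?_
      rw [Complex.norm_real, Real.norm_eq_abs, abs_of_nonneg ht.1]
      exact ht.2
    have hcnt : (Set.Icc (0 : ℝ) 1).Countable :=
      (hDc.preimage Complex.ofReal_injective).mono hsub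
    have h1 : #(Set.Icc (0 : ℝ) 1) ≤ ℵ₀ := Cardinal.le_aleph0_iff_set_countable.2 hcnt
    rw [Cardinal.mk_Icc_real zero_lt_one] at h1
    exact absurd h1 (not_le.2 Cardinal.aleph0_lt_continuum)
  obtain ⟨c0, hc0n, hc0D⟩ := hc0ex
  -- cardinality of ℂ is ℵ₁
  have hmkC : #ℂ = Cardinal.aleph 1 := by
    rw [mk_complex]
    refine Cardinal.lift_injective ?_
    rw [Cardinal.lift_continuum, Cardinal.lift_aleph, Ordinal.lift_one,
      ← Cardinal.two_power_aleph0]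
    exact hCH
  -- a well order on ℂ of type ω₁
  obtain ⟨e⟩ : Nonempty (ℂ ≃ (Cardinal.aleph 1).ord.ToType) := by
    rw [← Cardinal.eq, hmkC, Cardinal.mk_ord_toType]
  have hseg : ∀ z : ℂ, {w : ℂ | e w < e z}.Countable := by
    intro z
    have h1 : (Set.Iio (e z)).Countable := by
      rw [Cardinal.countable_iff_lt_aleph_one]
      exact Cardinal.mk_Iio_ord_toType (e z)
    have h2 : {w : ℂ | e w < e z} = e ⁻¹' Set.Iio (e z) := rfl
    rw [h2]
    exact h1.preimage e.injective
  -- construct the family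
  have hfam : ∀ β : ℂ, ∃ f : ℂ → ℂ,
      Differentiable ℂ f ∧ (∀ w, e w < e β → f w ∈ D) ∧ f β = c0 := by
    intro β
    set S : Set ℂ := ({w | e w < e β} ∪ Set.range (fun n : ℕ => (n : ℂ))) \ {β} with hSdef
    have hScount : S.Countable :=
      ((hseg β).union (Set.countable_range _)).mono Set.diff_subset
    have hSinf : S.Infinite := by
      have h1 : (Set.range (fun n : ℕ => (n : ℂ))).Infinite :=
        Set.infinite_range_of_injective (fun a b hab => Nat.cast_injective hab)
      refine (h1.diff (Set.finite_singleton β)).mono ?_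
      exact Set.diff_subset_diff_left Set.subset_union_right
    haveI := hScount.to_subtype
    haveI := hSinf.to_subtype
    haveI dS : Denumerable ↥S := (nonempty_denumerable ↥S).some
    set q : ℕ → ↥S := fun n => (Denumerable.eqv ↥S).symm n with hq
    have hqinj : Function.Injective q := fun a b hab => by
      simpa [hq] using (Denumerable.eqv ↥S).symm.injective hab
    have hqsurj : Function.Surjective q := fun s =>
      ⟨Denumerable.eqv ↥S s, by simp [hq]⟩
    set p : ℕ → ℂ := fun n => Nat.casesOn n β (fun m => (q m : ℂ)) with hpdef
    have hqne : ∀ m, (q m : ℂ) ≠ β := by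
      intro m hm
      exact ((q m).2.2 : (q m : ℂ) ∉ {β}) (by simpa using hm)
    have hpinj : Function.Injective p := by
      intro a b hab
      rcases a with _ | m <;> rcases b with _ | n
      · rfl
      · exact absurd hab.symm (hqne n)
      · exact absurd hab (hqne m)
      · have : q m = q n := Subtype.ext hab
        rw [hqinj this]
    obtain ⟨f, hfd, hfD, hf0⟩ := ErdosWetzel.interp D hDd p hpinj c0 hc0n
    refine ⟨f, hfd, ?_, hf0⟩
    intro w hw
    have hwβ : w ≠ β := fun h => absurd hw (h ▸ lt_irrefl _)
    have hwS : w ∈ S := ⟨Or.inl hw, by simpa using hwβ⟩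
    obtain ⟨m, hm⟩ := hqsurj ⟨w, hwS⟩
    have hpm : p (m + 1) = w := by rw [hpdef]; simpa using congrArg Subtype.val hm
    rw [← hpm]
    exact hfD (m + 1) (Nat.succ_le_succ (Nat.zero_le _))
  choose g hgd hgD hgβ using hfam
  refine ⟨Set.range g, ?_, ?_, ?_⟩
  · rintro f ⟨β, rfl⟩
    exact hgd β
  · intro hcnt
    have hginj : Function.Injective g := by
      intro a b hab
      by_contra hne
      rcases lt_trichotomy (e a) (e b) with h | h | h
      · have h1 : g b a ∈ D := hgD b a h
        have h2 : g a a = c0 := hgβ a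
        rw [hab] at h2
        exact hc0D (h2 ▸ h1)
      · exact hne (e.injective h)
      · have h1 : g a b ∈ D := hgD a b h
        have h2 : g b b = c0 := hgβ b
        rw [← hab] at h2
        exact hc0D (h2 ▸ h1)
    haveI := hcnt.to_subtype
    haveI : Countable ℂ := Countable.of_equiv _ (Equiv.ofInjective g hginj).symm
    have h1 : #ℂ ≤ ℵ₀ := Cardinal.mk_le_aleph0
    rw [hmkC] at h1
    exact absurd h1 (not_le.2 Cardinal.aleph0_lt_aleph_one)
  · intro z
    have himg : ((fun f : ℂ → ℂ => f z) '' Set.range g)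
        ⊆ D ∪ ((fun β => g β z) '' {β | e β ≤ e z}) := by
      rintro v ⟨f, ⟨β, rfl⟩, rfl⟩
      rcases lt_or_ge (e z) (e β) with h | h
      · exact Or.inl (hgD β z h)
      · exact Or.inr ⟨β, h, rfl⟩
    refine Set.Countable.mono himg (hDc.union (Set.Countable.image ?_ _))
    have hsub : {β : ℂ | e β ≤ e z} ⊆ insert z {w : ℂ | e w < e z} := by
      intro β hβ
      have hβ' : e β ≤ e z := hβ
      rcases lt_or_eq_of_le hβ' with h | h
      · exact Set.mem_insert_of_mem _ h
      · have : β = z := e.injective h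
        exact this ▸ Set.mem_insert _ _
    exact ((hseg z).insert z).mono hsub
end

section
/- Assume the Continuum Hypothesis, i.e. 2^ℵ₀ = ℵ₁. Then there exists a set F of entire functions (functions ℂ → ℂ analytic on all of ℂ) of cardinality 2^ℵ₀ (the cardinality of the continuum) such that for every point z ∈ ℂ the set of values {f(z) : f ∈ F} is countable. -/
open Cardinal

namespace WetzelCH

/-- The Gaussian rationals: a countable dense subset of `ℂ`. -/
def Dset : Set ℂ := Set.range fun p : ℚ × ℚ => (p.1 : ℂ) + (p.2 : ℂ) * Complex.I

lemma countable_Dset : Dset.Countable := Set.countable_range _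

lemma dense_Dset : Dense Dset := by
  rw [Metric.dense_iff]
  intro z r hr
  obtain ⟨q, hq⟩ := exists_rat_near z.re (half_pos hr)
  obtain ⟨p, hp⟩ := exists_rat_near z.im (half_pos hr)
  refine ⟨(q : ℂ) + (p : ℂ) * Complex.I, ?_, ⟨(q, p), rfl⟩⟩
  rw [Metric.mem_ball, Complex.dist_eq]
  have h1 : ((q:ℂ) + (p:ℂ)*Complex.I - z).re = (q:ℝ) - z.re := by simp
  have h2 : ((q:ℂ) + (p:ℂ)*Complex.I - z).im = (p:ℝ) - z.im := by simp
  calc ‖(q:ℂ) + (p:ℂ)*Complex.I - z‖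
      ≤ |((q:ℂ) + (p:ℂ)*Complex.I - z).re| + |((q:ℂ) + (p:ℂ)*Complex.I - z).im| :=
        Complex.norm_le_abs_re_add_abs_im _
    _ < r := by
        rw [h1, h2, abs_sub_comm ((q:ℝ)) z.re, abs_sub_comm ((p:ℝ)) z.im]
        linarith

lemma exists_Dset_near (a v : ℂ) {ε : ℝ} (hε : 0 < ε) :
    ∃ d, d ∈ Dset ∧ d ≠ v ∧ dist d a < ε := by
  have hU : IsOpen (Metric.ball a ε \ {v}) := Metric.isOpen_ball.sdiff isClosed_singleton
  have hne : (Metric.ball a ε \ {v}).Nonempty := by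
    by_cases hav : a = v
    · refine ⟨a + (ε/2 : ℝ), ?_, ?_⟩
      · rw [Metric.mem_ball, dist_eq_norm, add_sub_cancel_left]
        rw [Complex.norm_real]
        rw [Real.norm_eq_abs, abs_of_pos (half_pos hε)]
        linarith
      · simp only [Set.mem_singleton_iff, ← hav]
        intro h
        have : ((ε/2 : ℝ) : ℂ) = 0 := by linear_combination h
        have : (ε/2 : ℝ) = 0 := by exact_mod_cast this
        linarith
    · exact ⟨a, Metric.mem_ball_self hε, hav⟩
  obtain ⟨d, hd, hdU⟩ := dense_Dset.exists_mem_open hU hne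
  exact ⟨d, hd, hdU.2, Metric.mem_ball.1 hdU.1⟩


noncomputable section

/-- The interpolation basis polynomials. -/
def Pp (w : ℕ → ℂ) (n : ℕ) (z : ℂ) : ℂ := ∏ k ∈ Finset.range n, (z - w k)

lemma diff_Pp (w : ℕ → ℂ) (n : ℕ) : Differentiable ℂ (Pp w n) := by
  apply Differentiable.fun_finsetProd
  intro k _
  exact differentiable_id.sub_const _

def qq (w : ℕ → ℂ) (n : ℕ) : ℂ := Pp w n (w n)

lemma qq_ne (w : ℕ → ℂ) (hw : Function.Injective w) (n : ℕ) : qq w n ≠ 0 := by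
  rw [qq, Pp, Finset.prod_ne_zero_iff]
  intro k hk
  rw [sub_ne_zero]
  exact fun h => absurd (hw h) (Nat.ne_of_gt (Finset.mem_range.1 hk))

def epsn (w : ℕ → ℂ) (n : ℕ) : ℝ :=
  (1/2)^n / ∏ k ∈ Finset.range n, ((n : ℝ) + 1 + ‖w k‖)

lemma prod_pos (w : ℕ → ℂ) (n : ℕ) :
    0 < ∏ k ∈ Finset.range n, ((n : ℝ) + 1 + ‖w k‖) :=
  Finset.prod_pos fun k _ => by positivity

lemma epsn_pos (w : ℕ → ℂ) (n : ℕ) : 0 < epsn w n :=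
  div_pos (by positivity) (prod_pos w n)

def newcoef (w : ℕ → ℂ) (hw : Function.Injective w) (g : ℕ → ℂ → ℂ) (n : ℕ) (c : ℕ → ℂ) : ℂ :=
  (Classical.choose (exists_Dset_near (∑ m ∈ Finset.range n, c m * Pp w m (w n)) (g n (w n))
      (mul_pos (epsn_pos w n) (norm_pos_iff.mpr (qq_ne w hw n)))) -
    ∑ m ∈ Finset.range n, c m * Pp w m (w n)) / qq w n

def cvec (w : ℕ → ℂ) (hw : Function.Injective w) (g : ℕ → ℂ → ℂ) : ℕ → ℕ → ℂ
  | 0 => fun _ => 0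
  | n+1 => Function.update (cvec w hw g n) n (newcoef w hw g n (cvec w hw g n))

def coefn (w : ℕ → ℂ) (hw : Function.Injective w) (g : ℕ → ℂ → ℂ) (n : ℕ) : ℂ :=
  newcoef w hw g n (cvec w hw g n)

lemma cvec_eq (w : ℕ → ℂ) (hw : Function.Injective w) (g : ℕ → ℂ → ℂ) :
    ∀ n m, m < n → cvec w hw g n m = coefn w hw g m := by
  intro n
  induction n with
  | zero => omega
  | succ n ih =>
      intro m hm
      rcases Nat.lt_succ_iff_lt_or_eq.1 hm with h | h
      · rw [cvec, Function.update_of_ne (Nat.ne_of_lt h), ih m h]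
      · subst h; rw [cvec, Function.update_self, coefn]

/-- The value target sums. -/
def an (w : ℕ → ℂ) (hw : Function.Injective w) (g : ℕ → ℂ → ℂ) (n : ℕ) : ℂ :=
  ∑ m ∈ Finset.range n, coefn w hw g m * Pp w m (w n)

lemma an_eq (w : ℕ → ℂ) (hw : Function.Injective w) (g : ℕ → ℂ → ℂ) (n : ℕ) :
    ∑ m ∈ Finset.range n, cvec w hw g n m * Pp w m (w n) = an w hw g n :=
  Finset.sum_congr rfl fun m hm => by
    rw [cvec_eq w hw g n m (Finset.mem_range.1 hm)]

lemma coefn_spec (w : ℕ → ℂ) (hw : Function.Injective w) (g : ℕ → ℂ → ℂ) (n : ℕ) :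
    ‖coefn w hw g n‖ ≤ epsn w n ∧
      an w hw g n + coefn w hw g n * qq w n ∈ Dset ∧
      an w hw g n + coefn w hw g n * qq w n ≠ g n (w n) := by
  rw [← an_eq w hw g n]
  have h := Classical.choose_spec (exists_Dset_near
      (∑ m ∈ Finset.range n, cvec w hw g n m * Pp w m (w n)) (g n (w n))
      (mul_pos (epsn_pos w n) (norm_pos_iff.mpr (qq_ne w hw n))))
  set d := Classical.choose (exists_Dset_near
      (∑ m ∈ Finset.range n, cvec w hw g n m * Pp w m (w n)) (g n (w n))
      (mul_pos (epsn_pos w n) (norm_pos_iff.mpr (qq_ne w hw n)))) with hd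
  set a := ∑ m ∈ Finset.range n, cvec w hw g n m * Pp w m (w n) with ha
  have hc : coefn w hw g n = (d - a) / qq w n := by rw [coefn, newcoef]
  have hq : qq w n ≠ 0 := qq_ne w hw n
  have hval : a + coefn w hw g n * qq w n = d := by
    rw [hc]; field_simp; ring
  refine ⟨?_, hval ▸ h.1, hval ▸ h.2.1⟩
  rw [hc, norm_div]
  rw [div_le_iff₀ (norm_pos_iff.mpr hq)]
  have := h.2.2
  rw [dist_eq_norm] at this
  exact this.le


/-- The entire function built from the interpolation series. -/
def ff (w : ℕ → ℂ) (hw : Function.Injective w) (g : ℕ → ℂ → ℂ) : ℂ → ℂ :=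
  fun z => ∑' n, coefn w hw g n * Pp w n z

lemma term_bound (w : ℕ → ℂ) (hw : Function.Injective w) (g : ℕ → ℂ → ℂ)
    (n : ℕ) (z : ℂ) (hz : ‖z‖ ≤ n) :
    ‖coefn w hw g n * Pp w n z‖ ≤ (1/2)^n := by
  rw [norm_mul]
  have h1 : ‖Pp w n z‖ ≤ ∏ k ∈ Finset.range n, ((n : ℝ) + 1 + ‖w k‖) := by
    rw [Pp, norm_prod]
    apply Finset.prod_le_prod (fun k _ => norm_nonneg _)
    intro k _
    calc ‖z - w k‖ ≤ ‖z‖ + ‖w k‖ := norm_sub_le _ _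
      _ ≤ (n : ℝ) + 1 + ‖w k‖ := by linarith
  calc ‖coefn w hw g n‖ * ‖Pp w n z‖
      ≤ epsn w n * ∏ k ∈ Finset.range n, ((n : ℝ) + 1 + ‖w k‖) :=
        mul_le_mul (coefn_spec w hw g n).1 h1 (norm_nonneg _) (epsn_pos w n).le
    _ = (1/2)^n := by
        rw [epsn, div_mul_cancel₀]
        exact (prod_pos w n).ne'

lemma ff_diff (w : ℕ → ℂ) (hw : Function.Injective w) (g : ℕ → ℂ → ℂ) :
    Differentiable ℂ (ff w hw g) := by
  have hsum : Summable (fun n : ℕ => (1/2 : ℝ)^n) :=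
    summable_geometric_of_lt_one (by norm_num) (by norm_num)
  have hlu : TendstoLocallyUniformlyOn
      (fun (t : Finset ℕ) (z : ℂ) => ∑ n ∈ t, coefn w hw g n * Pp w n z)
      (ff w hw g) Filter.atTop Set.univ := by
    rw [tendstoLocallyUniformlyOn_iff_forall_isCompact isOpen_univ]
    intro K _ hK
    obtain ⟨R, hR⟩ := hK.isBounded.subset_closedBall 0
    apply tendstoUniformlyOn_tsum_of_cofinite_eventually hsum
    rw [Nat.cofinite_eq_atTop]
    filter_upwards [Filter.eventually_ge_atTop ⌈R⌉₊] with n hn z hz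
    apply term_bound w hw g n z
    have h1 : ‖z‖ ≤ R := by
      have := hR hz
      rwa [Metric.mem_closedBall, dist_zero_right] at this
    calc ‖z‖ ≤ R := h1
      _ ≤ (⌈R⌉₊ : ℝ) := Nat.le_ceil R
      _ ≤ (n : ℝ) := by exact_mod_cast hn
  have := hlu.differentiableOn
    (Filter.Eventually.of_forall fun t =>
      (DifferentiableOn.fun_sum fun i _ => ((diff_Pp w i).const_mul _).differentiableOn))
    isOpen_univ
  rw [← differentiableOn_univ]
  exact this

lemma ff_val (w : ℕ → ℂ) (hw : Function.Injective w) (g : ℕ → ℂ → ℂ) (n : ℕ) :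
    ff w hw g (w n) = an w hw g n + coefn w hw g n * qq w n := by
  rw [ff]
  have hzero : ∀ m ∉ Finset.range (n+1), coefn w hw g m * Pp w m (w n) = 0 := by
    intro m hm
    rw [Finset.mem_range, not_lt] at hm
    have : Pp w m (w n) = 0 :=
      Finset.prod_eq_zero (Finset.mem_range.2 hm) (sub_self _)
    rw [this, mul_zero]
  rw [tsum_eq_sum hzero, Finset.sum_range_succ, an, qq]

theorem keyA (w : ℕ → ℂ) (hw : Function.Injective w) (g : ℕ → ℂ → ℂ) :
    ∃ f : ℂ → ℂ, Differentiable ℂ f ∧ ∀ n, f (w n) ∈ Dset ∧ f (w n) ≠ g n (w n) := by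
  refine ⟨ff w hw g, ff_diff w hw g, fun n => ?_⟩
  rw [ff_val w hw g n]
  exact ⟨(coefn_spec w hw g n).2.1, (coefn_spec w hw g n).2.2⟩


lemma lemmaB (S : Set ℂ) (hS : S.Countable) (G : Set (ℂ → ℂ)) (hG : G.Countable) :
    ∃ f : ℂ → ℂ, Differentiable ℂ f ∧ (∀ z ∈ S, f z ∈ Dset) ∧ ∀ h ∈ G, f ≠ h := by
  classical
  set S' := S ∪ Set.range (fun n : ℕ => (n : ℂ)) with hS'def
  have hS' : S'.Countable := hS.union (Set.countable_range _)
  have hinf : S'.Infinite :=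
    Set.Infinite.mono Set.subset_union_right
      (Set.infinite_range_of_injective (fun a b h => by exact_mod_cast h))
  haveI : Countable ↥S' := hS'.to_subtype
  haveI : Infinite ↥S' := hinf.to_subtype
  obtain ⟨den⟩ := nonempty_denumerable ↥S'
  let e : ℕ ≃ ↥S' := (@Denumerable.eqv ↥S' den).symm
  let w : ℕ → ℂ := fun n => (e n : ℂ)
  have hw : Function.Injective w := fun a b h => e.injective (Subtype.ext h)
  obtain ⟨g, hg⟩ : ∃ g : ℕ → ℂ → ℂ, G ⊆ Set.range g := by
    rcases G.eq_empty_or_nonempty with h | h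
    · exact ⟨fun _ _ => 0, by simp [h]⟩
    · obtain ⟨g, hg⟩ := Set.Countable.exists_eq_range hG h
      exact ⟨g, hg.le⟩
  obtain ⟨f, hf, hfn⟩ := keyA w hw g
  refine ⟨f, hf, fun z hz => ?_, fun h hh => ?_⟩
  · have hzS' : z ∈ S' := Set.mem_union_left _ hz
    have : w (e.symm ⟨z, hzS'⟩) = z := by
      simp only [w, Equiv.apply_symm_apply]
    rw [← this]
    exact (hfn _).1
  · obtain ⟨n, rfl⟩ := hg hh
    intro hcontra
    exact (hfn n).2 (congrFun hcontra (w n))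

end
end WetzelCH

open WetzelCH in
/-- Assuming the Continuum Hypothesis, there is a family of entire functions of
cardinality `2 ^ ℵ₀` (the continuum) whose set of values at each point of `ℂ`
is countable. -/
theorem exists_continuum_family_of_CH
    (hCH : (2 : Cardinal) ^ Cardinal.aleph0 = Cardinal.aleph 1) :
    ∃ F : Set (ℂ → ℂ),
      (∀ f ∈ F, Differentiable ℂ f) ∧
      Cardinal.mk F = 2 ^ Cardinal.aleph0 ∧
      ∀ z : ℂ, ((fun f : ℂ → ℂ => f z) '' F).Countable := by
  classical
  have hCH0 : (2 : Cardinal.{0}) ^ Cardinal.aleph0 = Cardinal.aleph 1 :=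
    Cardinal.lift_injective (by
      rw [Cardinal.lift_two_power, Cardinal.lift_aleph0, Cardinal.lift_aleph, Ordinal.lift_one]
      exact hCH)
  set O := (Cardinal.aleph 1).ord.ToType with hO
  have hmkO : #O = Cardinal.aleph 1 := by
    rw [Cardinal.mk_toType, Cardinal.card_ord]
  have hmkC : #O = #ℂ := by
    rw [hmkO, mk_complex, ← Cardinal.two_power_aleph0, hCH0]
  obtain ⟨e⟩ := Cardinal.eq.1 hmkC
  -- countability of initial segments
  have hIio : ∀ x : O, (Set.Iio x).Countable := fun x =>
    (Cardinal.countable_iff_lt_aleph_one _).2 (Cardinal.mk_Iio_ord_toType x)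
  -- transfinite construction
  have hGcnt : ∀ (x : O) (p : ∀ y : O, y < x → (ℂ → ℂ)),
      {h : ℂ → ℂ | ∃ (y : O) (hy : y < x), p y hy = h}.Countable := by
    intro x p
    haveI : Countable ↥(Set.Iio x) := (hIio x).to_subtype
    have : {h : ℂ → ℂ | ∃ (y : O) (hy : y < x), p y hy = h} =
        Set.range (fun y : ↥(Set.Iio x) => p y.1 y.2) := by
      ext h
      simp only [Set.mem_setOf_eq, Set.mem_range, Subtype.exists]
      exact ⟨fun ⟨y, hy, hh⟩ => ⟨y, hy, hh⟩, fun ⟨y, hy, hh⟩ => ⟨y, hy, hh⟩⟩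
    rw [this]
    exact Set.countable_range _
  let step : ∀ x : O, (∀ y : O, y < x → (ℂ → ℂ)) → (ℂ → ℂ) := fun x p =>
    Classical.choose (lemmaB ((fun y => e y) '' Set.Iio x) ((hIio x).image _)
      {h : ℂ → ℂ | ∃ (y : O) (hy : y < x), p y hy = h} (hGcnt x p))
  let Φ : O → ℂ → ℂ := fun x => WellFounded.fix wellFounded_lt step x
  have hfix : ∀ x : O, Φ x = step x (fun y _ => Φ y) := fun x =>
    WellFounded.fix_eq wellFounded_lt step x
  have hspec : ∀ x : O, Differentiable ℂ (Φ x) ∧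
      (∀ y : O, y < x → Φ x (e y) ∈ Dset) ∧
      (∀ y : O, y < x → Φ x ≠ Φ y) := by
    intro x
    have hex := lemmaB ((fun y => e y) '' Set.Iio x) ((hIio x).image _)
      {h : ℂ → ℂ | ∃ (y : O) (hy : y < x), Φ y = h} (hGcnt x (fun y _ => Φ y))
    have h := Classical.choose_spec hex
    have hstep : Φ x = Classical.choose hex := hfix x
    rw [← hstep] at h
    refine ⟨h.1, fun y hy => h.2.1 _ ⟨y, hy, rfl⟩, fun y hy => h.2.2 _ ⟨y, hy, rfl⟩⟩
  have hinj : Function.Injective Φ := by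
    intro a b hab
    by_contra hne
    rcases lt_or_gt_of_ne hne with h | h
    · exact (hspec b).2.2 a h hab.symm
    · exact (hspec a).2.2 b h hab
  refine ⟨Set.range Φ, ?_, ?_, ?_⟩
  · rintro f ⟨x, rfl⟩
    exact (hspec x).1
  · rw [Cardinal.mk_range_eq Φ hinj]
    exact hmkO.trans hCH0.symm
  · intro z
    set x := e.symm z with hx
    have hresub : ((fun f : ℂ → ℂ => f z) '' Set.range Φ) ⊆
        Dset ∪ Set.range (fun t : ↥(Set.Iic x) => Φ t.1 z) := by
      rintro v ⟨f, ⟨t, rfl⟩, rfl⟩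
      rcases le_or_gt t x with h | h
      · exact Or.inr ⟨⟨t, h⟩, rfl⟩
      · left
        have : e x = z := e.apply_symm_apply z
        rw [← this]
        exact (hspec t).2.1 x h
    have hIic : (Set.Iic x).Countable := by
      have : Set.Iic x = insert x (Set.Iio x) := by
        ext y
        simp [le_iff_lt_or_eq, or_comm]
      rw [this]
      exact ((hIio x).insert x)
    haveI : Countable ↥(Set.Iic x) := hIic.to_subtype
    exact Set.Countable.mono hresub (countable_Dset.union (Set.countable_range _))
end

section
/- The following are equivalent: (i) the Continuum Hypothesis 2^ℵ₀ = ℵ₁ holds; (ii) there exists an uncountable set F of entire functions (functions ℂ → ℂ analytic on all of ℂ) such that for every point z ∈ ℂ the set of values {f(z) : f ∈ F} is countable. Equivalently, the answer to Wetzel's problem (every family of analytic functions with pointwise countable value sets is countable) is affirmative if and only if the Continuum Hypothesis fails. -/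
open Set Complex Finset Cardinal


noncomputable section Wetzel

/-- Partial products `∏_{k<n} (z - w k)`. -/
def wP (w : ℕ → ℂ) (n : ℕ) (z : ℂ) : ℂ := ∏ k ∈ Finset.range n, (z - w k)

/-- Smallness bounds for the coefficients. -/
def wEps (w : ℕ → ℂ) (n : ℕ) : ℝ :=
  ((2:ℝ)^n * (1 + ∏ k ∈ Finset.range n, ((n:ℝ) + ‖w k‖)))⁻¹

lemma wEps_pos (w : ℕ → ℂ) (n : ℕ) : 0 < wEps w n := by
  apply inv_pos.mpr
  apply mul_pos (by positivity)
  have : (0:ℝ) ≤ ∏ k ∈ Finset.range n, ((n:ℝ) + ‖w k‖) :=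
    Finset.prod_nonneg fun k _ => by positivity
  linarith

lemma wP_diff (w : ℕ → ℂ) (n : ℕ) : Differentiable ℂ (wP w n) := by
  unfold wP
  apply Differentiable.fun_finsetProd
  intro k _
  exact differentiable_id.sub (differentiable_const _)

lemma wP_zero (w : ℕ → ℂ) {m n : ℕ} (h : m < n) : wP w n (w m) = 0 :=
  Finset.prod_eq_zero (Finset.mem_range.mpr h) (sub_self _)

lemma wP_ne_zero {w : ℕ → ℂ} (hw : Function.Injective w) (m : ℕ) : wP w m (w m) ≠ 0 := by
  unfold wP
  apply Finset.prod_ne_zero_iff.mpr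
  intro k hk
  rw [sub_ne_zero]
  exact fun h => absurd (hw h.symm) (Nat.ne_of_lt (Finset.mem_range.mp hk))

lemma wP_bound (w : ℕ → ℂ) (n : ℕ) {R : ℝ} {z : ℂ} (hz : ‖z‖ ≤ R) :
    ‖wP w n z‖ ≤ ∏ k ∈ Finset.range n, (R + ‖w k‖) := by
  unfold wP
  rw [norm_prod]
  apply Finset.prod_le_prod (fun k _ => norm_nonneg _)
  intro k _
  calc ‖z - w k‖ ≤ ‖z‖ + ‖w k‖ := norm_sub_le _ _
    _ ≤ R + ‖w k‖ := by linarith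

/-- The key choice step: inside any small ball we can find a point landing in `D`
and avoiding one bad value. -/
lemma wStep {D : Set ℂ} (hD : Dense D) (s c t : ℂ) (hc : c ≠ 0) {e : ℝ} (he : 0 < e) :
    ∃ z : ℂ, ‖z‖ ≤ e ∧ s + z * c ∈ D ∧ s + z * c ≠ t := by
  set r := e * ‖c‖ with hr
  have hrpos : 0 < r := mul_pos he (norm_pos_iff.mpr hc)
  have hU : IsOpen (Metric.ball s r \ {t}) :=
    Metric.isOpen_ball.sdiff isClosed_singleton
  have hUne : (Metric.ball s r \ {t}).Nonempty := by
    rcases eq_or_ne s t with h | h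
    · refine ⟨s + (r/2 : ℝ), ?_, ?_⟩
      · simp only [Metric.mem_ball, dist_self_add_left]
        rw [Complex.norm_real, Real.norm_eq_abs, abs_of_pos (by linarith)]
        linarith
      · simp only [Set.mem_singleton_iff, ← h]
        intro hh
        have h2 : ((r/2 : ℝ) : ℂ) = 0 := by
          apply add_left_cancel (a := s)
          rw [add_zero]; exact hh
        rw [Complex.ofReal_eq_zero] at h2
        linarith
    · exact ⟨s, Metric.mem_ball_self hrpos, h⟩
  obtain ⟨q, hqD, hq⟩ := hD.exists_mem_open hU hUne
  refine ⟨(q - s) / c, ?_, ?_, ?_⟩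
  · rw [norm_div]
    rw [div_le_iff₀ (norm_pos_iff.mpr hc)]
    have : ‖q - s‖ < r := by
      have := hq.1
      rwa [Metric.mem_ball, dist_eq_norm] at this
    rw [hr] at this; linarith
  · have : s + (q - s) / c * c = q := by field_simp; ring
    rw [this]; exact hqD
  · have : s + (q - s) / c * c = q := by field_simp; ring
    rw [this]; exact hq.2

/-- Recursive choice of coefficients. -/
def wCoeff {D : Set ℂ} (hD : Dense D) {w : ℕ → ℂ} (hw : Function.Injective w)
    (a : ℕ → ℂ) : ℕ → ℂ
  | m =>
    (wStep hD (∑ n ∈ (Finset.range m).attach, wCoeff hD hw a n.1 * wP w n.1 (w m))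
      (wP w m (w m)) (a m) (wP_ne_zero hw m) (wEps_pos w m)).choose
  termination_by m => m
  decreasing_by all_goals exact Finset.mem_range.mp n.2


lemma wCoeff_spec {D : Set ℂ} (hD : Dense D) {w : ℕ → ℂ} (hw : Function.Injective w)
    (a : ℕ → ℂ) (m : ℕ) :
    ‖wCoeff hD hw a m‖ ≤ wEps w m ∧
    (∑ n ∈ Finset.range m, wCoeff hD hw a n * wP w n (w m)) + wCoeff hD hw a m * wP w m (w m) ∈ D ∧
    (∑ n ∈ Finset.range m, wCoeff hD hw a n * wP w n (w m)) + wCoeff hD hw a m * wP w m (w m) ≠ a m := by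
  have hs : ∑ n ∈ (Finset.range m).attach, wCoeff hD hw a n.1 * wP w n.1 (w m)
      = ∑ n ∈ Finset.range m, wCoeff hD hw a n * wP w n (w m) := Finset.sum_attach _ (fun n => wCoeff hD hw a n * wP w n (w m))
  rw [← hs]
  have he : wCoeff hD hw a m = (wStep hD (∑ n ∈ (Finset.range m).attach, wCoeff hD hw a n.1 * wP w n.1 (w m))
      (wP w m (w m)) (a m) (wP_ne_zero hw m) (wEps_pos w m)).choose := by
    conv_lhs => rw [wCoeff]
  rw [he]
  exact (wStep hD _ (wP w m (w m)) (a m) (wP_ne_zero hw m) (wEps_pos w m)).choose_spec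

end Wetzel
open Set Complex Finset

noncomputable section Wetzel2

variable {D : Set ℂ} (hD : Dense D) {w : ℕ → ℂ} (hw : Function.Injective w) (a : ℕ → ℂ)

/-- The entire function built from the coefficients. -/
def wF (hD : Dense D) (hw : Function.Injective w) (a : ℕ → ℂ) (z : ℂ) : ℂ :=
  ∑' n, wCoeff hD hw a n * wP w n z

lemma wSummable (R : ℝ) (hR : 0 ≤ R) :
    Summable (fun n => wEps w n * ∏ k ∈ Finset.range n, (R + ‖w k‖)) := by
  apply Summable.of_norm_bounded_eventually_nat (g := fun n => (2⁻¹ : ℝ)^n)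
  · exact summable_geometric_of_lt_one (by norm_num) (by norm_num)
  · filter_upwards [Filter.eventually_ge_atTop ⌈R⌉₊] with n hn
    have hprod_nonneg : (0:ℝ) ≤ ∏ k ∈ Finset.range n, (R + ‖w k‖) :=
      Finset.prod_nonneg fun k _ => by positivity
    have hB_nonneg : (0:ℝ) ≤ ∏ k ∈ Finset.range n, ((n:ℝ) + ‖w k‖) :=
      Finset.prod_nonneg fun k _ => by positivity
    have hle : ∏ k ∈ Finset.range n, (R + ‖w k‖) ≤ ∏ k ∈ Finset.range n, ((n:ℝ) + ‖w k‖) := by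
      apply Finset.prod_le_prod (fun k _ => by positivity)
      intro k _
      have : R ≤ (n:ℝ) := le_trans (Nat.le_ceil R) (by exact_mod_cast hn)
      linarith
    rw [Real.norm_eq_abs, _root_.abs_of_nonneg (mul_nonneg (wEps_pos w n).le hprod_nonneg)]
    unfold wEps
    rw [inv_mul_le_iff₀ (by positivity), inv_pow]
    calc ∏ k ∈ Finset.range n, (R + ‖w k‖)
        ≤ 1 + ∏ k ∈ Finset.range n, ((n:ℝ) + ‖w k‖) := by linarith
      _ = (2:ℝ) ^ n * (1 + ∏ k ∈ Finset.range n, ((n:ℝ) + ‖w k‖)) * ((2:ℝ)^n)⁻¹ := by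
          rw [mul_comm ((2:ℝ)^n), mul_assoc, mul_inv_cancel₀ (by positivity : ((2:ℝ)^n) ≠ 0), mul_one]

lemma wF_differentiable : Differentiable ℂ (wF hD hw a) := by
  intro z₀
  set R : ℝ := ‖z₀‖ + 1 with hR
  have hR0 : 0 ≤ R := by positivity
  have hdiff : DifferentiableOn ℂ (wF hD hw a) (Metric.ball 0 R) := by
    apply differentiableOn_tsum_of_summable_norm (wSummable (w := w) R hR0)
    · exact fun n => ((wP_diff w n).const_mul _).differentiableOn
    · exact Metric.isOpen_ball
    · intro n z hz
      rw [norm_mul]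
      have h1 : ‖wP w n z‖ ≤ ∏ k ∈ Finset.range n, (R + ‖w k‖) := by
        apply wP_bound
        rw [Metric.mem_ball, dist_zero_right] at hz
        exact hz.le
      exact mul_le_mul (wCoeff_spec hD hw a n).1 h1 (norm_nonneg _) (wEps_pos w n).le
  exact hdiff.differentiableAt (Metric.isOpen_ball.mem_nhds (by rw [Metric.mem_ball, dist_zero_right]; linarith))

lemma wF_val (m : ℕ) :
    wF hD hw a (w m) =
      (∑ n ∈ Finset.range m, wCoeff hD hw a n * wP w n (w m)) +
        wCoeff hD hw a m * wP w m (w m) := by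
  unfold wF
  rw [tsum_eq_sum (s := Finset.range (m+1)) ?_, Finset.sum_range_succ]
  intro n hn
  rw [Finset.mem_range, not_lt] at hn
  rw [wP_zero w (Nat.lt_of_succ_le hn), mul_zero]

lemma wF_mem (m : ℕ) : wF hD hw a (w m) ∈ D := by
  rw [wF_val]; exact (wCoeff_spec hD hw a m).2.1

lemma wF_ne (m : ℕ) : wF hD hw a (w m) ≠ a m := by
  rw [wF_val]; exact (wCoeff_spec hD hw a m).2.2

/-- The interpolation lemma: given a dense set `D`, a countable set `A` and a countable
family `G` of functions, there is an entire function mapping `A` into `D` avoiding `G`. -/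
lemma exists_entire_fun {D : Set ℂ} (hD : Dense D) {A : Set ℂ} (hA : A.Countable)
    {G : Set (ℂ → ℂ)} (hG : G.Countable) :
    ∃ f : ℂ → ℂ, Differentiable ℂ f ∧ (∀ z ∈ A, f z ∈ D) ∧ f ∉ G := by
  -- enlarge A to a countably infinite set
  set A' := A ∪ Set.range (Nat.cast : ℕ → ℂ) with hA'
  have hA'c : A'.Countable := hA.union (Set.countable_range _)
  have hA'i : A'.Infinite := Set.Infinite.mono Set.subset_union_right
    (Set.infinite_range_of_injective Nat.cast_injective)
  haveI := hA'c.to_subtype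
  haveI := hA'i.to_subtype
  haveI := (nonempty_denumerable ↥A').some
  set e : ↥A' ≃ ℕ := Denumerable.eqv ↥A' with hedef
  set w : ℕ → ℂ := fun n => ((e.symm n : ↥A') : ℂ) with hwdef
  have hw : Function.Injective w := by
    intro m n hmn
    exact e.symm.injective (Subtype.ext hmn)
  have hrange : ∀ z ∈ A', ∃ m, w m = z := fun z hz => ⟨e ⟨z, hz⟩, by simp [hwdef]⟩
  -- enumerate G
  set G' := insert (fun _ => (0:ℂ)) G with hG'
  obtain ⟨g, hg⟩ := (hG.insert (fun _ => (0:ℂ))).exists_eq_range (Set.insert_nonempty _ _)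
  set a : ℕ → ℂ := fun m => g m (w m) with hadef
  refine ⟨wF hD hw a, wF_differentiable hD hw a, ?_, ?_⟩
  · intro z hz
    obtain ⟨m, rfl⟩ := hrange z (Set.mem_union_left _ hz)
    exact wF_mem hD hw a m
  · intro hmem
    have : wF hD hw a ∈ Set.range g := by rw [← hg]; exact Set.mem_insert_of_mem _ hmem
    obtain ⟨m, hm⟩ := this
    exact wF_ne hD hw a m (by rw [← hm])

end Wetzel2


lemma countable_setOf_eq_of_entire {f g : ℂ → ℂ} (hf : Differentiable ℂ f)
    (hg : Differentiable ℂ g) (hne : f ≠ g) : {z | f z = g z}.Countable := by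
  set h := f - g with hh
  have hha : AnalyticOnNhd ℂ h Set.univ :=
    (hf.sub hg).differentiableOn.analyticOnNhd isOpen_univ
  have key : ∀ n : ℕ, ({z | f z = g z} ∩ Metric.closedBall 0 n).Finite := by
    intro n
    by_contra hinf
    rw [← Set.not_infinite, not_not] at hinf
    obtain ⟨x, -, hx⟩ := hinf.exists_accPt_of_subset_isCompact
      (isCompact_closedBall 0 n) Set.inter_subset_right
    have hfreq : ∃ᶠ z in nhdsWithin x {x}ᶜ, h z = 0 := by
      have h2 := (accPt_iff_frequently (x := x)).mp hx
      rw [frequently_nhdsWithin_iff]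
      exact h2.mono (fun z hz => ⟨by simpa [hh, sub_eq_zero] using hz.2.1, hz.1⟩)
    have h3 : ∀ z ∈ Set.univ, h z = 0 :=
      hha.eqOn_zero_of_preconnected_of_frequently_eq_zero isPreconnected_univ (Set.mem_univ x) hfreq
    apply hne
    funext z
    have := h3 z (Set.mem_univ z)
    simpa [hh, sub_eq_zero] using this
  have : {z | f z = g z} = ⋃ n : ℕ, ({z | f z = g z} ∩ Metric.closedBall 0 n) := by
    ext z
    simp only [Set.mem_iUnion, Set.mem_inter_iff, Metric.mem_closedBall, dist_zero_right]
    exact ⟨fun hz => ⟨⌈‖z‖⌉₊, hz, Nat.le_ceil _⟩, fun h => h.choose_spec.1⟩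
  rw [this]
  exact Set.countable_iUnion fun n => (key n).countable



lemma family_imp_CH (F : Set (ℂ → ℂ)) (hdiff : ∀ f ∈ F, Differentiable ℂ f)
    (huncount : ¬ F.Countable) (hval : ∀ z : ℂ, ((fun f : ℂ → ℂ => f z) '' F).Countable) :
    (Cardinal.continuum : Cardinal.{0}) = Cardinal.aleph 1 := by
  refine le_antisymm ?_ aleph_one_le_continuum
  by_contra hlt
  push_neg at hlt
  have hF1 : aleph 1 ≤ #F := by
    rw [← succ_aleph0, Order.succ_le_iff]
    by_contra hle
    push_neg at hle
    exact huncount (Cardinal.le_aleph0_iff_set_countable.mp hle)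
  obtain ⟨S, hS⟩ := Cardinal.le_mk_iff_exists_set.mp hF1
  let E : Set ℂ := ⋃ p : S × S, {z | (p.1 : ℂ → ℂ) z = (p.2 : ℂ → ℂ) z ∧ (p.1 : F) ≠ p.2}
  have hEcard : #E ≤ aleph 1 := by
    refine (Cardinal.mk_iUnion_le _).trans ?_
    have h1 : #(S × S) = aleph 1 := by
      simp only [Cardinal.mk_prod, Cardinal.lift_id, hS]
      exact Cardinal.mul_eq_self (aleph0_le_aleph 1)
    rw [h1]
    have h2 : (⨆ p : S × S, #({z | (p.1 : ℂ → ℂ) z = (p.2 : ℂ → ℂ) z ∧ (p.1 : F) ≠ p.2})) ≤ ℵ₀ := by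
      refine ciSup_le' fun p => ?_
      rcases eq_or_ne (p.1 : F) p.2 with h | h
      · simp [h]
      · have hc : {z | (p.1 : ℂ → ℂ) z = (p.2 : ℂ → ℂ) z ∧ (p.1 : F) ≠ p.2}.Countable := by
          have := countable_setOf_eq_of_entire (hdiff _ (p.1 : F).2) (hdiff _ (p.2 : F).2)
            (fun hh => h (Subtype.ext hh))
          exact this.mono (fun z hz => hz.1)
        exact Cardinal.mk_le_aleph0_iff.mpr hc.to_subtype
    calc aleph 1 * (⨆ p : S × S, #({z | (p.1 : ℂ → ℂ) z = (p.2 : ℂ → ℂ) z ∧ (p.1 : F) ≠ p.2}))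
        ≤ aleph 1 * ℵ₀ := mul_le_mul_right h2 _
      _ = aleph 1 := Cardinal.mul_aleph0_eq (aleph0_le_aleph 1)
  have hEne : E ≠ Set.univ := by
    intro h
    rw [h] at hEcard
    rw [Cardinal.mk_univ, mk_complex] at hEcard
    exact absurd (hEcard.trans_lt hlt) (lt_irrefl _)
  obtain ⟨z, hz⟩ : ∃ z : ℂ, z ∉ E := by
    by_contra h; push_neg at h
    exact hEne (Set.eq_univ_of_forall h)
  -- injection S → image of F at z
  have hinj : Function.Injective (fun f : S => (f : ℂ → ℂ) z) := by
    intro f₁ f₂ hf12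
    by_contra hne
    have hne' : (f₁ : F) ≠ f₂ := fun h => hne (Subtype.ext h)
    exact hz (Set.mem_iUnion.mpr ⟨(f₁, f₂), hf12, hne'⟩)
  have h3 : aleph 1 ≤ ℵ₀ := by
    have : #S ≤ #((fun f : ℂ → ℂ => f z) '' F) := by
      refine Cardinal.mk_le_of_injective (f := fun f : S =>
        (⟨(f : ℂ → ℂ) z, ⟨(f : F), (f : F).2, rfl⟩⟩ : ((fun f : ℂ → ℂ => f z) '' F))) ?_
      intro a b hab
      exact hinj (congrArg Subtype.val hab)
    rw [hS] at this
    exact this.trans (Cardinal.mk_le_aleph0_iff.mpr (hval z).to_subtype)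
  exact absurd h3 (not_le.mpr aleph0_lt_aleph_one)



lemma CH_imp_family (hCH : (Cardinal.continuum : Cardinal.{0}) = Cardinal.aleph 1) :
    ∃ F : Set (ℂ → ℂ),
      (∀ f ∈ F, Differentiable ℂ f) ∧
      ¬ F.Countable ∧
      ∀ z : ℂ, ((fun f : ℂ → ℂ => f z) '' F).Countable := by
  obtain ⟨D, hDc, hDd⟩ := TopologicalSpace.exists_countable_dense ℂ
  set ι := (Cardinal.aleph 1).ord.ToType with hι
  have hmkι : #ι = Cardinal.aleph 1 := by
    rw [hι, Cardinal.mk_toType, Cardinal.card_ord]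
  have hmkℂ : #ℂ = #ι := by rw [hmkι, mk_complex, hCH]
  obtain ⟨b⟩ : Nonempty (ι ≃ ℂ) := Cardinal.eq.mp hmkℂ.symm
  -- countability of initial segments
  have hIio : ∀ x : ι, (Set.Iio x).Countable := by
    intro x
    rw [Cardinal.countable_iff_lt_aleph_one]
    exact Cardinal.mk_Iio_ord_toType x
  have hIic : ∀ x : ι, (Set.Iic x).Countable := by
    intro x
    have : Set.Iic x = Set.Iio x ∪ {x} := by
      ext y; simp [le_iff_lt_or_eq]
    rw [this]
    exact (hIio x).union (Set.countable_singleton x)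
  -- the recursion
  have wf : WellFounded ((· < ·) : ι → ι → Prop) := IsWellFounded.wf
  set step : ∀ x : ι, (∀ y : ι, y < x → (ℂ → ℂ)) → (ℂ → ℂ) := fun x prev =>
    (exists_entire_fun hDd ((hIic x).image b)
      (G := Set.range fun y : Set.Iio x => prev y.1 y.2)
      (haveI := (hIio x).to_subtype; Set.countable_range _)).choose with hstep
  set f : ι → (ℂ → ℂ) := wf.fix step with hf
  have heq : ∀ x : ι, f x = step x (fun y _ => f y) := fun x => wf.fix_eq step x
  have hspec : ∀ x : ι, Differentiable ℂ (f x) ∧ (∀ z ∈ b '' (Set.Iic x), f x z ∈ D) ∧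
      f x ∉ Set.range (fun y : Set.Iio x => f y.1) := by
    intro x
    have h := (exists_entire_fun hDd ((hIic x).image b)
      (G := Set.range fun y : Set.Iio x => f y.1)
      (haveI := (hIio x).to_subtype; Set.countable_range _)).choose_spec
    rw [heq x]
    exact h
  -- injectivity
  have hinj : Function.Injective f := by
    intro x y hxy
    by_contra hne
    rcases lt_or_gt_of_ne hne with h | h
    · exact (hspec y).2.2 ⟨⟨x, h⟩, hxy⟩
    · exact (hspec x).2.2 ⟨⟨y, h⟩, hxy.symm⟩
  refine ⟨Set.range f, ?_, ?_, ?_⟩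
  · rintro g ⟨x, rfl⟩
    exact (hspec x).1
  · intro hc
    have h1 : #(Set.range f) = Cardinal.aleph 1 := by
      rw [Cardinal.mk_range_eq f hinj, hmkι]
    have := Cardinal.countable_iff_lt_aleph_one _ |>.mp hc
    rw [h1] at this
    exact absurd this (lt_irrefl _)
  · intro z
    set x₀ := b.symm z with hx₀
    have hsub : ((fun g : ℂ → ℂ => g z) '' Set.range f) ⊆
        D ∪ (Set.range fun y : Set.Iio x₀ => f y.1 z) := by
      rintro - ⟨-, ⟨x, rfl⟩, rfl⟩
      rcases lt_or_ge x x₀ with h | h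
      · exact Set.mem_union_right _ ⟨⟨x, h⟩, rfl⟩
      · refine Set.mem_union_left _ ?_
        apply (hspec x).2.1
        exact ⟨x₀, h, by rw [hx₀, Equiv.apply_symm_apply]⟩
    refine Set.Countable.mono hsub ?_
    exact hDc.union (haveI := (hIio x₀).to_subtype; Set.countable_range _)

lemma CH_bridge : ((2 : Cardinal.{u}) ^ Cardinal.aleph0 = Cardinal.aleph 1) ↔
    ((Cardinal.continuum : Cardinal.{0}) = Cardinal.aleph 1) := by
  rw [two_power_aleph0, ← lift_continuum.{u,0},
    show (aleph 1 : Cardinal.{u}) = Cardinal.lift.{u} (aleph 1 : Cardinal.{0}) by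
      rw [lift_aleph, Ordinal.lift_one], Cardinal.lift_inj]

open Cardinal in
/-- Erdős' theorem: the Continuum Hypothesis holds if and only if there exists
an uncountable family of entire functions whose set of values at each point of
`ℂ` is countable. Equivalently, the answer to Wetzel's problem is affirmative
iff CH fails. -/
theorem CH_iff_exists_uncountable_family :
    (2 : Cardinal) ^ Cardinal.aleph0 = Cardinal.aleph 1 ↔
      ∃ F : Set (ℂ → ℂ),
        (∀ f ∈ F, Differentiable ℂ f) ∧
        ¬ F.Countable ∧
        ∀ z : ℂ, ((fun f : ℂ → ℂ => f z) '' F).Countable := by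
  rw [CH_bridge]
  constructor
  · exact CH_imp_family
  · rintro ⟨F, h1, h2, h3⟩
    exact family_imp_CH F h1 h2 h3
end
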